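/- Let X be a finite nonempty alphabet and p a probability distribution on X. Then 0 ≤ H*(p) ≤ 1. -/

import Mathlib

open Real

lemma F_anti : AntitoneOn (fun t : ℝ => t * Real.log t - (t+1) * Real.log (t+1)) (Set.Icc 0 1) := by
  have hc : ContinuousOn (fun t : ℝ => t * Real.log t - (t+1) * Real.log (t+1)) (Set.Icc 0 1) := by
    apply ContinuousOn.sub
    · exact Real.continuous_mul_log.continuousOn
    · exact (Real.continuous_mul_log.comp (continuous_id.add continuous_const)).continuousOn
  have hderiv : ∀ x ∈ Set.Ioo (0:ℝ) 1,
      HasDerivAt (fun t : ℝ => t * Real.log t - (t+1) * Real.log (t+1))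
        ((Real.log x + 1) - (Real.log (x+1) + 1)) x := by
    intro x hx
    have hd1 : HasDerivAt (fun t : ℝ => t * Real.log t) (Real.log x + 1) x :=
      Real.hasDerivAt_mul_log hx.1.ne'
    have hd2 : HasDerivAt (fun t : ℝ => (t+1) * Real.log (t+1)) (Real.log (x+1) + 1) x := by
      have h := Real.hasDerivAt_mul_log (x := x+1) (by nlinarith [hx.1] : x + 1 ≠ 0)
      have hadd : HasDerivAt (fun t : ℝ => t + 1) 1 x := (hasDerivAt_id x).add_const 1
      simpa [Function.comp_def] using h.comp x hadd
    exact hd1.sub hd2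
  apply antitoneOn_of_deriv_nonpos (convex_Icc 0 1) hc
  · intro x hx
    rw [interior_Icc] at hx
    exact ((hderiv x hx).differentiableAt).differentiableWithinAt
  · intro x hx
    rw [interior_Icc] at hx
    rw [(hderiv x hx).deriv]
    have : Real.log x < Real.log (x+1) := Real.log_lt_log hx.1 (by linarith)
    linarith

lemma key {t : ℝ} (ht : 0 < t) (ht1 : t ≤ 1) : (t+1) ^ (t+1) ≤ 4 * t ^ t := by
  have hF := F_anti (Set.mem_Icc.2 ⟨ht.le, ht1⟩) (Set.mem_Icc.2 ⟨zero_le_one, le_refl 1⟩) ht1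
  simp only [Real.log_one, mul_zero, one_mul] at hF
  have h4 : Real.log 4 = 2 * Real.log 2 := by
    rw [show (4:ℝ) = 2^2 by norm_num, Real.log_pow]; push_cast; ring
  have h2' : Real.log (1+1) = Real.log 2 := by norm_num
  rw [h2'] at hF
  have hlog : (t+1) * Real.log (t+1) ≤ Real.log 4 + t * Real.log t := by
    rw [h4]; nlinarith [hF]
  have h1 : (t+1) ^ (t+1) = Real.exp ((t+1) * Real.log (t+1)) := by
    rw [Real.rpow_def_of_pos (by linarith), mul_comm]
  have h2 : 4 * t ^ t = Real.exp (Real.log 4 + t * Real.log t) := by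
    rw [Real.exp_add, Real.exp_log (by norm_num : (0:ℝ) < 4),
      Real.rpow_def_of_pos ht, mul_comm (Real.log t) t]
  rw [h1, h2]
  exact Real.exp_le_exp.2 hlog

lemma term_bounds {t : ℝ} (h0 : 0 ≤ t) (h1 : t ≤ 1) :
    0 ≤ t * ((1 / 2) * Real.logb 2 (4 * t ^ t / (t + 1) ^ (t + 1))) ∧
    t * ((1 / 2) * Real.logb 2 (4 * t ^ t / (t + 1) ^ (t + 1))) ≤ t := by
  rcases eq_or_lt_of_le h0 with h | hpos
  · simp [← h]
  set R := 4 * t ^ t / (t + 1) ^ (t + 1) with hR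
  have hden : (0:ℝ) < (t+1) ^ (t+1) := Real.rpow_pos_of_pos (by linarith) _
  have hR1 : 1 ≤ R := by
    rw [hR, le_div_iff₀ hden, one_mul]
    exact key hpos h1
  have hR4 : R ≤ 4 := by
    rw [hR, div_le_iff₀ hden]
    have htt : t ^ t ≤ 1 := Real.rpow_le_one h0 h1 h0
    have h11 : (1:ℝ) ≤ (t+1) ^ (t+1) := Real.one_le_rpow (by linarith) (by linarith)
    nlinarith
  have hlb0 : 0 ≤ Real.logb 2 R := Real.logb_nonneg one_lt_two hR1
  have hlb2 : Real.logb 2 R ≤ 2 := by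
    have h1' : Real.logb 2 R ≤ Real.logb 2 4 :=
      Real.logb_le_logb_of_le one_lt_two (by linarith) hR4
    have h24 : Real.logb 2 4 = 2 := by
      rw [Real.logb, show (4:ℝ) = 2^2 by norm_num, Real.log_pow]
      have := Real.log_pos one_lt_two
      field_simp
      norm_num
    linarith
  constructor
  · positivity
  · nlinarith

/-- Lin entropy of a distribution on a finite alphabet. -/
noncomputable def linEntropy {X : Type*} [Fintype X] (p : X → ℝ) : ℝ :=
  ∑ x, p x * ((1 / 2) * Real.logb 2 (4 * p x ^ p x / (p x + 1) ^ (p x + 1)))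

/-- Lin entropy is bounded between 0 and 1 on every finite nonempty alphabet. -/
theorem linEntropy_nonneg_le_one
    {X : Type*} [Fintype X] [Nonempty X] (p : X → ℝ)
    (hp : ∀ x, 0 ≤ p x) (hsum : ∑ x, p x = 1) :
    0 ≤ linEntropy p ∧ linEntropy p ≤ 1 := by
  have hle1 : ∀ x, p x ≤ 1 := by
    intro x
    calc p x ≤ ∑ y, p y := Finset.single_le_sum (fun y _ => hp y) (Finset.mem_univ x)
    _ = 1 := hsum
  constructor
  · exact Finset.sum_nonneg fun x _ => (term_bounds (hp x) (hle1 x)).1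
  · calc linEntropy p ≤ ∑ x, p x :=
          Finset.sum_le_sum fun x _ => (term_bounds (hp x) (hle1 x)).2
      _ = 1 := hsum
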